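/- Let (M, d) be a metric space, let a, b ∈ M, and let γ : [0,1] → M be a constant-speed geodesic with γ(0) = a and γ(1) = b. Let τ > 0, α > 0, and set t* := ατ/(1 + ατ) ∈ (0,1). Then the point γ(t*) is a global minimizer over M of the proximal functional J(x) := (1/(2τ)) d(x, a)² + (α/2) d(x, b)²; that is, for every x ∈ M, (1/(2τ)) d(x, a)² + (α/2) d(x, b)² ≥ (1/(2τ)) d(γ(t*), a)² + (α/2) d(γ(t*), b)², where d(γ(t*), a) = t*·d(a,b) and d(γ(t*), b) = (1−t*)·d(a,b). -/

import Mathlib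

/-- State-independent contraction: the point at parameter `t* = ατ/(1+ατ)` along a
constant-speed geodesic from `a` to `b` is a global minimizer of the proximal functional
`x ↦ (1/(2τ)) d(x,a)² + (α/2) d(x,b)²`. -/
theorem stmt_6
    {M : Type*} [MetricSpace M] (a b : M) (γ : ℝ → M)
    (hgeo : ∀ s ∈ Set.Icc (0:ℝ) 1, ∀ t ∈ Set.Icc (0:ℝ) 1,
      dist (γ s) (γ t) = |s - t| * dist (γ 0) (γ 1))
    (h0 : γ 0 = a) (h1 : γ 1 = b)
    (τ α : ℝ) (hτ : 0 < τ) (hα : 0 < α) :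
    α * τ / (1 + α * τ) ∈ Set.Ioo (0:ℝ) 1 ∧
    (∀ x : M,
      1 / (2 * τ) * dist x a ^ 2 + α / 2 * dist x b ^ 2 ≥
        1 / (2 * τ) * dist (γ (α * τ / (1 + α * τ))) a ^ 2
          + α / 2 * dist (γ (α * τ / (1 + α * τ))) b ^ 2) ∧
    dist (γ (α * τ / (1 + α * τ))) a = α * τ / (1 + α * τ) * dist a b ∧
    dist (γ (α * τ / (1 + α * τ))) b = (1 - α * τ / (1 + α * τ)) * dist a b := by
  have hden : 0 < 1 + α * τ := by positivity
  set t : ℝ := α * τ / (1 + α * τ) with ht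
  have hατ : 0 < α * τ := by positivity
  have ht0 : 0 < t := by positivity
  have ht1 : t < 1 := by
    rw [ht, div_lt_one hden]; linarith
  have htmem : t ∈ Set.Icc (0:ℝ) 1 := ⟨ht0.le, ht1.le⟩
  have h0m : (0:ℝ) ∈ Set.Icc (0:ℝ) 1 := ⟨le_refl 0, zero_le_one⟩
  have h1m : (1:ℝ) ∈ Set.Icc (0:ℝ) 1 := ⟨zero_le_one, le_refl 1⟩
  have hD : dist (γ 0) (γ 1) = dist a b := by rw [h0, h1]
  have ha : dist (γ t) a = t * dist a b := by
    have := hgeo t htmem 0 h0m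
    rw [hD, h0] at this
    rwa [sub_zero, abs_of_pos ht0] at this
  have hb : dist (γ t) b = (1 - t) * dist a b := by
    have := hgeo t htmem 1 h1m
    rw [hD, h1] at this
    rwa [show |t - 1| = 1 - t by rw [abs_of_neg (by linarith)]; ring] at this
  refine ⟨⟨ht0, ht1⟩, ?_, ha, hb⟩
  intro x
  rw [ha, hb]
  have htri : dist a b ≤ dist x a + dist x b := by
    rw [dist_comm x a]; exact dist_triangle a x b
  have hu : 0 ≤ dist x a := dist_nonneg
  have hv : 0 ≤ dist x b := dist_nonneg
  have htdef : t * (1 + α * τ) = α * τ := by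
    rw [ht, div_mul_cancel₀ _ hden.ne']
  set u := dist x a
  set v := dist x b
  set D := dist a b
  rw [ge_iff_le]
  have h2 : (0:ℝ) < 2 * τ := by positivity
  have hDnn : 0 ≤ D := dist_nonneg
  simp only [div_mul_eq_mul_div, one_mul]
  rw [div_add_div _ _ h2.ne' two_ne_zero, div_add_div _ _ h2.ne' two_ne_zero,
    div_le_div_iff₀ (by positivity) (by positivity)]
  have hsum : (t^2 + α*τ*(1-t)^2) * D^2 = t * D^2 := by
    rw [ht]; field_simp; ring
  have hmain : t * D^2 ≤ u^2 + α*τ*v^2 := by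
    rw [← mul_le_mul_iff_right₀ hden]
    have hl : (1+α*τ)*(t*D^2) = α*τ*D^2 := by
      rw [← mul_assoc, mul_comm (1+α*τ) t, htdef]
    rw [hl]
    nlinarith [sq_nonneg (u - α*τ*v), mul_self_le_mul_self hDnn htri, hατ,
      mul_nonneg hu hv]
  nlinarith [hmain, hsum, hτ, mul_le_mul_of_nonneg_left hmain hτ.le]
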